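/- Under the setting of the simple bail process, at each arrival time a_j where the running infimum I(t) = inf_{s ≤ t} min(0, M(s)) decreases, the size of the decrease equals b_j − M*(a_j−); that is, I(a_j+) − I(a_j−) = M*(a_j−) − b_j whenever M*(a_j−) < b_j. -/

import Mathlib

open Filter Set

/-- Running infimum `I(t) = inf_{s ≤ t} min(0, M(s))`. -/
noncomputable def runInf (M : ℝ → ℝ) (t : ℝ) : ℝ :=
  sInf ((fun s => min 0 (M s)) '' Set.Icc 0 t)

/-- In the simple bail process setting, whenever the running infimum decreases at an
arrival time `a_j` (i.e. `M*(a_j−) < b_j`), the size of the decrease is exactly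
`b_j − M*(a_j−)`: `I(a_j+) − I(a_j−) = M*(a_j−) − b_j`.  (Here `I` is right-continuous,
so `I(a_j+) = I(a_j)`.) -/
theorem runInf_jump_size
    (G : ℝ → ℝ) (a b : ℕ → ℝ) (M : ℝ → ℝ)
    (hGmono : Monotone G) (hG0 : 0 ≤ G 0)
    (hGright : ∀ t, ContinuousWithinAt G (Set.Ici t) t)
    (ha : StrictMono a) (hapos : ∀ j, 0 < a j)
    (hainf : Tendsto a atTop atTop)
    (hGa : ∀ j, ContinuousAt G (a j))
    (hb : ∀ j, 0 < b j)
    (hM : ∀ t, M t = G t - ∑' j, if a j ≤ t then b j else 0)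
    (Mstarleft Ileft : ℕ → ℝ)
    (hMstarleft : ∀ j, Tendsto (fun t => M t - runInf M t)
      (nhdsWithin (a j) (Set.Iio (a j))) (nhds (Mstarleft j)))
    (hIleft : ∀ j, Tendsto (runInf M)
      (nhdsWithin (a j) (Set.Iio (a j))) (nhds (Ileft j))) :
    ∀ j, Mstarleft j < b j →
      runInf M (a j) - Ileft j = Mstarleft j - b j := by
  intro j hj
  set S : ℝ → ℝ := fun t => ∑' k, if a k ≤ t then b k else 0 with hSdef
  have hsum : ∀ t, Summable (fun k => if a k ≤ t then b k else 0) := by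
    intro t
    obtain ⟨N, hN⟩ := eventually_atTop.1 (hainf.eventually_gt_atTop t)
    apply summable_of_ne_finset_zero (s := Finset.range N)
    intro k hk
    simp only [Finset.mem_range, not_lt] at hk
    simp [not_le.2 (hN k hk)]
  have hMS : ∀ t, M t = G t - S t := by
    intro t; rw [hSdef]; exact hM t
  have hS0 : ∀ t, 0 ≤ S t := by
    intro t
    rw [hSdef]
    refine tsum_nonneg fun k => ?_
    split_ifs
    · exact (hb k).le
    · exact le_rfl
  have hSmono : Monotone S := by
    intro s t hst
    rw [hSdef]
    refine Summable.tsum_le_tsum (fun k => ?_) (hsum s) (hsum t)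
    by_cases h : a k ≤ s
    · simp [h, h.trans hst]
    · simp only [h, if_false]
      split_ifs
      · exact (hb k).le
      · exact le_rfl
  have haj : 0 < a j := hapos j
  -- lower bound for min 0 (M u) on [0, T]
  have hbd : ∀ T : ℝ, ∀ u ∈ Set.Icc (0:ℝ) T, -S T ≤ min 0 (M u) := by
    intro T u hu
    have h1 : S u ≤ S T := hSmono hu.2
    have h2 : 0 ≤ S T := (hS0 u).trans h1
    have h3 : G 0 ≤ G u := hGmono hu.1
    have h4 : M u = G u - S u := hMS u
    rw [le_min_iff]
    constructor
    · linarith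
    · linarith
  have hbdd : ∀ T : ℝ, BddBelow ((fun s => min 0 (M s)) '' Set.Icc 0 T) := by
    intro T
    exact ⟨-S T, by rintro x ⟨u, hu, rfl⟩; exact hbd T u hu⟩
  have hne : ∀ T : ℝ, 0 ≤ T → ((fun s => min 0 (M s)) '' Set.Icc 0 T).Nonempty :=
    fun T hT => ⟨_, ⟨0, ⟨le_rfl, hT⟩, rfl⟩⟩
  set J := sInf ((fun s => min 0 (M s)) '' Set.Ico 0 (a j)) with hJdef
  have hbddIco : BddBelow ((fun s => min 0 (M s)) '' Set.Ico 0 (a j)) :=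
    ⟨-S (a j), by rintro x ⟨u, hu, rfl⟩; exact hbd (a j) u ⟨hu.1, hu.2.le⟩⟩
  have hneIco : ((fun s => min 0 (M s)) '' Set.Ico 0 (a j)).Nonempty :=
    ⟨_, ⟨0, ⟨le_rfl, haj⟩, rfl⟩⟩
  -- the left limit of runInf is J
  have hItend : Tendsto (runInf M) (nhdsWithin (a j) (Set.Iio (a j))) (nhds J) := by
    rw [Metric.tendsto_nhds]
    intro ε hε
    obtain ⟨_, ⟨u, hu, rfl⟩, hult⟩ :=
      exists_lt_of_csInf_lt hneIco (lt_add_of_pos_right J hε)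
    filter_upwards [Ico_mem_nhdsLT_of_mem (⟨hu.2, le_rfl⟩ : a j ∈ Set.Ioc u (a j))]
      with t ht
    have h0t : (0:ℝ) ≤ t := hu.1.trans ht.1
    have hup : runInf M t ≤ min 0 (M u) :=
      csInf_le (hbdd t) ⟨u, ⟨hu.1, ht.1⟩, rfl⟩
    have hlow : J ≤ runInf M t := by
      refine csInf_le_csInf hbddIco (hne t h0t) ?_
      exact Set.image_mono (Set.Icc_subset_Ico_right ht.2)
    rw [Real.dist_eq, abs_lt]
    constructor <;> linarith
  have hIJ : Ileft j = J := tendsto_nhds_unique (hIleft j) hItend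
  -- left limit of M
  obtain ⟨c, hc, hck⟩ : ∃ c, c < a j ∧ ∀ k, k < j → a k ≤ c := by
    rcases Nat.eq_zero_or_pos j with h0 | hpos
    · exact ⟨a j - 1, by linarith, fun k hk => absurd hk (by omega)⟩
    · exact ⟨a (j - 1), ha (by omega), fun k hk => ha.monotone (by omega)⟩
  have hSconst : ∀ t ∈ Set.Ioo c (a j), S t = S (a j) - b j := by
    intro t ht
    have key : ∀ k, (if a k ≤ a j then b k else 0)
        = (if a k ≤ t then b k else 0) + (if k = j then b j else 0) := by
      intro k
      rcases lt_trichotomy k j with hk | hk | hk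
      · have h1 : a k ≤ t := (hck k hk).trans ht.1.le
        simp [h1, h1.trans ht.2.le, Nat.ne_of_lt hk]
      · subst hk
        simp [not_le.2 ht.2]
      · have h1 : ¬ a k ≤ a j := not_le.2 (ha hk)
        have h2 : ¬ a k ≤ t := fun h => h1 (h.trans ht.2.le)
        simp [h1, h2, Nat.ne_of_gt hk]
    have hsum2 : Summable (fun k : ℕ => if k = j then b j else 0) := by
      apply summable_of_ne_finset_zero (s := {j})
      intro k hk
      simp only [Finset.mem_singleton] at hk
      simp [hk]
    have hcalc : S (a j) = S t + b j := by
      rw [hSdef]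
      calc (∑' k, if a k ≤ a j then b k else 0)
          = ∑' k, ((if a k ≤ t then b k else 0) + (if k = j then b j else 0)) :=
            tsum_congr key
        _ = (∑' k, if a k ≤ t then b k else 0) + ∑' k : ℕ, (if k = j then b j else 0) :=
            Summable.tsum_add (hsum t) hsum2
        _ = (∑' k, if a k ≤ t then b k else 0) + b j := by rw [tsum_ite_eq j (fun _ => b j)]
    linarith
  have hG : Tendsto G (nhdsWithin (a j) (Set.Iio (a j))) (nhds (G (a j))) :=
    (hGa j).tendsto.mono_left nhdsWithin_le_nhds
  have hSt : Tendsto S (nhdsWithin (a j) (Set.Iio (a j))) (nhds (S (a j) - b j)) := by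
    apply Tendsto.congr' _ (tendsto_const_nhds (x := S (a j) - b j))
    filter_upwards [Ioo_mem_nhdsLT_of_mem (⟨hc, le_rfl⟩ : a j ∈ Set.Ioc c (a j))]
      with t ht
    exact (hSconst t ht).symm
  have hMtend : Tendsto M (nhdsWithin (a j) (Set.Iio (a j)))
      (nhds (G (a j) - (S (a j) - b j))) :=
    Tendsto.congr (fun t => (hMS t).symm) (hG.sub hSt)
  have hMtend' : Tendsto M (nhdsWithin (a j) (Set.Iio (a j)))
      (nhds (Mstarleft j + Ileft j)) := by
    have h := (hMstarleft j).add (hIleft j)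
    exact h.congr (fun t => by ring)
  have hkey : Mstarleft j + Ileft j = G (a j) - (S (a j) - b j) :=
    tendsto_nhds_unique hMtend' hMtend
  have hMa : M (a j) = G (a j) - S (a j) := hMS (a j)
  have hm : M (a j) = Mstarleft j + Ileft j - b j := by linarith
  -- compute runInf at a j
  have hJ0 : J ≤ 0 :=
    le_trans (csInf_le hbddIco ⟨0, ⟨le_rfl, haj⟩, rfl⟩) (min_le_left _ _)
  have himg : (fun s => min 0 (M s)) '' Set.Icc 0 (a j)
      = insert (min 0 (M (a j))) ((fun s => min 0 (M s)) '' Set.Ico 0 (a j)) := by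
    rw [← Set.Ico_insert_right haj.le, Set.image_insert_eq]
  have hrun : runInf M (a j) = min (min 0 (M (a j))) J := by
    rw [runInf, himg, csInf_insert hbddIco hneIco]
  have h1 : M (a j) ≤ J := by rw [hm, hIJ]; linarith
  have h2 : M (a j) ≤ 0 := h1.trans hJ0
  rw [hrun, min_eq_right h2, min_eq_left h1, hIJ, hm, hIJ]
  ring
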